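/- arXiv:2310.19414 — 16 statements merged into one kernel-verified Lean document; each statement's English description precedes it below -/
import Mathlib

section
/- The map φ : T_{S(I)}(X,P) → S(I) defined by fφ = χ^(f) is a surjective semigroup homomorphism. Moreover, if id_X ∈ T_{S(I)}(X,P), then id_X φ = id_I. -/
open Function Set

/-- `c : I → I` is the character of `f` w.r.t. the partition of `X` whose blocks are
the fibers of `idx : X → I`: the block `X_i = idx⁻¹{i}` is mapped by `f` into `X_{c i}`. -/
def IsChar {X I : Type*} (idx : X → I) (f : X → X) (c : I → I) : Prop :=
  ∀ x, c (idx x) = idx (f x)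

/-- `f` preserves the partition, i.e. `f ∈ T(X,P)`. -/
def PresP {X I : Type*} (idx : X → I) (f : X → X) : Prop :=
  ∃ c, IsChar idx f c

/-- `f ∈ T_{S(I)}(X,P)`: the character of `f` lies in `S`. -/
def InTS {X I : Type*} (idx : X → I) (S : Set (I → I)) (f : X → X) : Prop :=
  ∃ c ∈ S, IsChar idx f c

/-- `α` is a unit of the (sub)monoid `S` of `T(I)`. -/
def IsUnitS {I : Type*} (S : Set (I → I)) (α : I → I) : Prop :=
  α ∈ S ∧ ∃ β ∈ S, (∀ i, β (α i) = i) ∧ (∀ i, α (β i) = i)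

/-- `u` is a unit of the monoid `T_{S(I)}(X,P)`. -/
def IsUnitTS {X I : Type*} (idx : X → I) (S : Set (I → I)) (u : X → X) : Prop :=
  InTS idx S u ∧ ∃ v, InTS idx S v ∧ (∀ x, v (u x) = x) ∧ (∀ x, u (v x) = x)

theorem character_epimorphism {X I : Type*} (idx : X → I)
    (hsurj : Function.Surjective idx) (S : Set (I → I))
    (hS : ∀ α ∈ S, ∀ β ∈ S, (fun i => β (α i)) ∈ S) :
    -- φ is a homomorphism: the character of `fg` is `χ^(f)χ^(g)`
    (∀ f g : X → X, ∀ cf cg : I → I, cf ∈ S → cg ∈ S →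
        IsChar idx f cf → IsChar idx g cg →
        IsChar idx (fun x => g (f x)) (fun i => cg (cf i))) ∧
    -- φ is surjective: every `α ∈ S` is the character of some `f ∈ T_{S(I)}(X,P)`
    (∀ α ∈ S, ∃ f : X → X, IsChar idx f α) ∧
    -- moreover `id_X φ = id_I`
    IsChar idx (id : X → X) (id : I → I) := by
  obtain ⟨s, hs⟩ := hsurj.hasRightInverse
  refine ⟨fun f g cf cg _ _ hf hg x => ?_, fun α _ => ⟨fun x => s (α (idx x)), fun x => ?_⟩,
    fun x => rfl⟩
  · simp only [hf x, hg (f x)]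
  · rw [hs]
end

section
/- Let f ∈ T_{S(I)}(X,P). Then f is a regular element of T_{S(I)}(X,P) (i.e., there exists g ∈ T_{S(I)}(X,P) with fgf = f) if and only if there exists α ∈ S(I) such that (i) χ^(f) α χ^(f) = χ^(f), and (ii) X_i ∩ Xf ⊆ X_{iα} f for all i in the image of χ^(f). -/
open Function Set

theorem regular_element_iff {X I : Type*} (idx : X → I)
    (hsurj : Function.Surjective idx) (S : Set (I → I))
    (hS : ∀ α ∈ S, ∀ β ∈ S, (fun i => β (α i)) ∈ S)
    (f : X → X) (cf : I → I) (hf : IsChar idx f cf) (hcf : cf ∈ S) :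
    (∃ g, InTS idx S g ∧ ∀ x, f (g (f x)) = f x) ↔
      ∃ α ∈ S, (∀ i, cf (α (cf i)) = cf i) ∧
        ∀ i ∈ Set.range cf, idx ⁻¹' {i} ∩ Set.range f ⊆ f '' (idx ⁻¹' {α i}) := by
  constructor
  · rintro ⟨g, ⟨cg, hcgS, hcg⟩, hfgf⟩
    refine ⟨cg, hcgS, ?_, ?_⟩
    · intro i
      obtain ⟨x, rfl⟩ := hsurj i
      rw [hf, hcg, hf, hfgf]
    · rintro i ⟨j, rfl⟩ y ⟨hy1, z, rfl⟩
      simp only [Set.mem_preimage, Set.mem_singleton_iff] at hy1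
      refine ⟨g (f z), ?_, hfgf z⟩
      simp only [Set.mem_preimage, Set.mem_singleton_iff]
      rw [← hcg, hy1]
  · rintro ⟨α, hαS, h1, h2⟩
    have hex : ∀ y : X, ∃ w : X, idx w = α (idx y) ∧
        ((idx y ∈ Set.range cf ∧ y ∈ Set.range f) → f w = y) := by
      intro y
      by_cases hy : idx y ∈ Set.range cf ∧ y ∈ Set.range f
      · obtain ⟨w, hw1, hw2⟩ := h2 (idx y) hy.1 ⟨rfl, hy.2⟩
        exact ⟨w, hw1, fun _ => hw2⟩
      · obtain ⟨w, hw⟩ := hsurj (α (idx y))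
        exact ⟨w, hw, fun h => absurd h hy⟩
    choose g hg1 hg2 using hex
    refine ⟨g, ⟨α, hαS, fun y => (hg1 y).symm⟩, ?_⟩
    intro x
    exact hg2 (f x) ⟨⟨idx x, (hf x)⟩, ⟨x, rfl⟩⟩
end

section
/- Let f ∈ T(X,P). Then f is regular in T(X,P) if and only if for every i ∈ I there exists j ∈ I such that X_i ∩ Xf ⊆ X_j f. -/
open Function Set

theorem regular_element_TXP_iff {X I : Type*} (idx : X → I)
    (hsurj : Function.Surjective idx) (f : X → X) (hfP : PresP idx f) :
    (∃ g, PresP idx g ∧ ∀ x, f (g (f x)) = f x) ↔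
      ∀ i : I, ∃ j : I, idx ⁻¹' {i} ∩ Set.range f ⊆ f '' (idx ⁻¹' {j}) := by
  obtain ⟨cf, hcf⟩ := hfP
  constructor
  · rintro ⟨g, ⟨cg, hcg⟩, hgf⟩ i
    refine ⟨cg i, ?_⟩
    rintro y ⟨hy, x, rfl⟩
    refine ⟨g (f x), ?_, hgf x⟩
    simp only [mem_preimage, mem_singleton_iff] at hy ⊢
    rw [← hcg (f x), hy]
  · intro h
    choose j hj using h
    have hg : ∀ x : X, ∃ w : X, idx w = j (idx x) ∧ (x ∈ Set.range f → f w = x) := by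
      intro x
      by_cases hx : x ∈ Set.range f
      · obtain ⟨w, hw, hfw⟩ := hj (idx x) ⟨rfl, hx⟩
        exact ⟨w, hw, fun _ => hfw⟩
      · obtain ⟨w, hw⟩ := hsurj (j (idx x))
        exact ⟨w, hw, fun h => absurd h hx⟩
    choose g hg1 hg2 using hg
    exact ⟨g, ⟨j, fun x => (hg1 x).symm⟩, fun x => hg2 (f x) ⟨x, rfl⟩⟩
end

section
/- The semigroup T_{S(I)}(X,P) is regular if and only if (i) S(I) is a regular semigroup, and (ii) for each α ∈ S(I), whenever there exists i ∈ I with |i α^{-1}| ≥ 2, the block X_i is a singleton. -/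
open Function Set

theorem regular_semigroup_iff {X I : Type*} (idx : X → I)
    (hsurj : Function.Surjective idx) (S : Set (I → I))
    (hS : ∀ α ∈ S, ∀ β ∈ S, (fun i => β (α i)) ∈ S) :
    (∀ f, InTS idx S f → ∃ g, InTS idx S g ∧ ∀ x, f (g (f x)) = f x) ↔
      ((∀ α ∈ S, ∃ β ∈ S, ∀ i, α (β (α i)) = α i) ∧
       (∀ α ∈ S, ∀ i : I, (∃ j k, j ≠ k ∧ α j = i ∧ α k = i) →
          (idx ⁻¹' {i}).Subsingleton)) := by
  classical
  have hsi : ∀ i, idx (surjInv hsurj i) = i := fun i => surjInv_eq hsurj i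
  constructor
  · intro hreg
    constructor
    · -- S is regular
      intro α hα
      obtain ⟨g, ⟨β, hβ, hgc⟩, hfg⟩ :=
        hreg (fun x => surjInv hsurj (α (idx x))) ⟨α, hα, fun x => (hsi _).symm⟩
      refine ⟨β, hβ, fun i => ?_⟩
      obtain ⟨x, rfl⟩ := hsurj i
      have h := congrArg idx (hfg x)
      simp only [hsi] at h
      rw [← hgc, hsi] at h
      exact h
    · -- singleton blocks
      rintro α hα i ⟨j, k, hjk, hj, hk⟩ x₁ hx₁ x₂ hx₂
      simp only [mem_preimage, mem_singleton_iff] at hx₁ hx₂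
      set F : I → X := fun m => if m = j then x₁ else if m = k then x₂ else surjInv hsurj (α m)
        with hF
      have hFc : ∀ m, idx (F m) = α m := by
        intro m
        by_cases h1 : m = j
        · simp [hF, h1, hx₁, hj]
        · by_cases h2 : m = k
          · simp [hF, h1, h2, hx₂, hk, Ne.symm hjk]
          · simp [hF, h1, h2, hsi]
      obtain ⟨g, ⟨β, hβ, hgc⟩, hfg⟩ :=
        hreg (fun y => F (idx y)) ⟨α, hα, fun y => (hFc _).symm⟩
      obtain ⟨a, ha⟩ := hsurj j
      obtain ⟨b, hb⟩ := hsurj k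
      have hFj : F j = x₁ := by simp [hF]
      have hFk : F k = x₂ := by simp [hF, (Ne.symm hjk : k ≠ j)]
      have h1 : F (idx (g x₁)) = x₁ := by
        have h := hfg a
        simp only [ha, hFj] at h
        exact h
      have h2 : F (idx (g x₂)) = x₂ := by
        have h := hfg b
        simp only [hb, hFk] at h
        exact h
      have hidx : idx (g x₁) = idx (g x₂) := by
        rw [← hgc, ← hgc, hx₁, hx₂]
      rw [← h1, ← h2, hidx]
  · rintro ⟨hregS, hsing⟩ f ⟨α, hα, hfc⟩
    obtain ⟨β, hβ, hβα⟩ := hregS α hα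
    set g : X → X := fun y =>
      if h : ∃ z, idx z = β (idx y) ∧ f z = y then h.choose else surjInv hsurj (β (idx y))
      with hg
    have hgidx : ∀ y, idx (g y) = β (idx y) := by
      intro y
      by_cases h : ∃ z, idx z = β (idx y) ∧ f z = y
      · simp only [hg, dif_pos h]; exact h.choose_spec.1
      · simp only [hg, dif_neg h, hsi]
    refine ⟨g, ⟨β, hβ, fun y => (hgidx y).symm⟩, fun x => ?_⟩
    have hy : ∃ z, idx z = β (idx (f x)) ∧ f z = f x := by
      by_cases hc : ∃ j k, j ≠ k ∧ α j = α (idx x) ∧ α k = α (idx x)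
      · have hsub := hsing α hα (α (idx x)) hc
        refine ⟨surjInv hsurj (β (idx (f x))), hsi _, ?_⟩
        apply hsub
        · show idx _ ∈ ({α (idx x)} : Set I)
          rw [mem_singleton_iff, ← hfc, hsi, ← hfc x, hβα]
        · show idx (f x) ∈ ({α (idx x)} : Set I)
          rw [mem_singleton_iff, ← hfc]
      · push_neg at hc
        have hβeq : β (α (idx x)) = idx x := by
          by_contra hne
          exact hc _ _ hne (hβα (idx x)) rfl
        exact ⟨x, by rw [← hfc x, hβeq], rfl⟩
    have : g (f x) = hy.choose := by
      simp only [hg, dif_pos hy]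
    rw [this]
    exact hy.choose_spec.2
end

section
/- If S(I) is a subgroup of the symmetric group Sym(I), then the semigroup T_{S(I)}(X,P) is regular. -/
open Function Set

theorem regular_of_subgroup {X I : Type*} (idx : X → I)
    (hsurj : Function.Surjective idx) (S : Set (I → I))
    (hS : ∀ α ∈ S, ∀ β ∈ S, (fun i => β (α i)) ∈ S)
    (hid : (id : I → I) ∈ S)
    (hinv : ∀ α ∈ S, ∃ β ∈ S, (∀ i, β (α i) = i) ∧ (∀ i, α (β i) = i)) :
    ∀ f, InTS idx S f → ∃ g, InTS idx S g ∧ ∀ x, f (g (f x)) = f x := by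
  intro f ⟨c, hcS, hc⟩
  obtain ⟨β, hβS, hβc, hcβ⟩ := hinv c hcS
  classical
  set g : X → X := fun y => if h : ∃ x, f x = y then Classical.choose h
    else Classical.choose (hsurj (β (idx y))) with hg
  refine ⟨g, ⟨β, hβS, ?_⟩, ?_⟩
  · intro y
    by_cases h : ∃ x, f x = y
    · have hy : f (Classical.choose h) = y := Classical.choose_spec h
      simp only [hg, dif_pos h]
      rw [← hβc (idx (Classical.choose h)), hc (Classical.choose h), hy]
    · simp only [hg, dif_neg h]
      exact (Classical.choose_spec (hsurj (β (idx y)))).symm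
  · intro x
    have h : ∃ x', f x' = f x := ⟨x, rfl⟩
    simp only [hg, dif_pos h]
    exact Classical.choose_spec h
end

section
/- The semigroup T(X,P) is regular if and only if the partition P is trivial (i.e., all blocks are singletons, or there is a single block). -/
open Function Set

theorem TXP_regular_iff_trivial {X I : Type*} [Nonempty X] (idx : X → I)
    (hsurj : Function.Surjective idx) :
    (∀ f : X → X, PresP idx f → ∃ g, PresP idx g ∧ ∀ x, f (g (f x)) = f x) ↔
      ((∀ i : I, (idx ⁻¹' {i}).Subsingleton) ∨ (∀ x y : X, idx x = idx y)) := by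

  classical
  constructor
  · intro hreg
    by_contra hcon
    push_neg at hcon
    obtain ⟨h1, h2⟩ := hcon
    obtain ⟨i, hi⟩ := h1
    obtain ⟨a, ha, b, hb, hab⟩ := hi
    simp only [Set.mem_preimage, Set.mem_singleton_iff] at ha hb
    obtain ⟨x, y, hxy⟩ := h2
    have hz : ∃ z, idx z ≠ idx a := by
      by_cases hx : idx x = idx a
      · exact ⟨y, by rw [← hx]; exact fun h => hxy h.symm⟩
      · exact ⟨x, hx⟩
    obtain ⟨z, hz⟩ := hz
    set f : X → X := fun w => if idx w = idx a then a else b with hf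
    have hfP : PresP idx f := by
      refine ⟨fun j => if j = idx a then idx a else idx b, fun w => ?_⟩
      by_cases h : idx w = idx a <;> simp [hf, h]
    obtain ⟨g, ⟨c, hc⟩, heq⟩ := hreg f hfP
    have hfa : f a = a := by simp [hf]
    have hfz : f z = b := by simp [hf, hz]
    have hga : idx (g a) = idx a := by
      have := heq a
      rw [hfa] at this
      by_contra h
      simp only [hf, if_neg h] at this
      exact hab this.symm
    have hgb : idx (g b) ≠ idx a := by
      have := heq z
      rw [hfz] at this
      intro h
      simp only [hf, if_pos h] at this
      exact hab this
    have hca : c (idx a) = idx a := by rw [hc a, hga]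
    have hcb : c (idx b) ≠ idx a := by rw [hc b]; exact hgb
    exact hcb (by rw [hb, ← ha]; exact hca)
  · intro htriv f _
    set g : X → X := fun y => if h : ∃ w, f w = y then h.choose else y with hg
    have hgf : ∀ w, f (g (f w)) = f w := by
      intro w
      have h : ∃ v, f v = f w := ⟨w, rfl⟩
      simp only [hg, dif_pos h]
      exact h.choose_spec
    refine ⟨g, ?_, hgf⟩
    rcases htriv with hsing | hconst
    · have hinj : Function.Injective idx := fun u v huv =>
        hsing (idx v) (by simp [huv]) (by simp)
      refine ⟨fun j => idx (g (Function.surjInv hsurj j)), fun w => ?_⟩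
      exact congrArg (fun u => idx (g u)) (hinj (Function.surjInv_eq hsurj (idx w)))
    · exact ⟨id, fun w => hconst w (g w)⟩
end

section
/- Let f ∈ T_{S(I)}(X,P). Then f is idempotent if and only if (i) χ^(f) is an idempotent of S(I), (ii) for each i in the image of χ^(f), the restriction of f to X_i is an idempotent map of X_i (note i χ^(f) = i for such i), and (iii) for each i not in the image of χ^(f), X_i f ⊆ X_{i χ^(f)} f. -/
open Function Set

theorem idempotent_iff {X I : Type*} (idx : X → I)
    (hsurj : Function.Surjective idx) (S : Set (I → I))
    (hS : ∀ α ∈ S, ∀ β ∈ S, (fun i => β (α i)) ∈ S)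
    (f : X → X) (cf : I → I) (hf : IsChar idx f cf) (hcf : cf ∈ S) :
    (∀ x, f (f x) = f x) ↔
      ((∀ i, cf (cf i) = cf i) ∧
       (∀ i ∈ Set.range cf, ∀ x, idx x = i → idx (f x) = i ∧ f (f x) = f x) ∧
       (∀ i ∉ Set.range cf, f '' (idx ⁻¹' {i}) ⊆ f '' (idx ⁻¹' {cf i}))) := by
  constructor
  · intro hid
    refine ⟨?_, ?_, ?_⟩
    · intro i
      obtain ⟨x, rfl⟩ := hsurj i
      have h1 := hf x
      have h2 := hf (f x)
      rw [h1, h2, hid x]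
    · rintro i ⟨j, rfl⟩ x hx
      obtain ⟨y, rfl⟩ := hsurj j
      have h1 : cf (idx x) = idx (f x) := hf x
      rw [hx] at h1
      have h2 : cf (cf (idx y)) = cf (idx y) := by
        rw [hf y, hf (f y), hid y]
      exact ⟨by rw [← h1, h2], hid x⟩
    · rintro i - y ⟨x, hx, rfl⟩
      refine ⟨f x, ?_, hid x⟩
      simp only [mem_preimage, mem_singleton_iff] at hx ⊢
      rw [← hf x, hx]
  · rintro ⟨h1, h2, h3⟩ x
    by_cases hr : idx x ∈ Set.range cf
    · exact (h2 _ hr x rfl).2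
    · obtain ⟨z, hz, hfz⟩ := h3 _ hr ⟨x, rfl, rfl⟩
      simp only [mem_preimage, mem_singleton_iff] at hz
      rw [← hfz]
      exact (h2 (cf (idx x)) ⟨_, rfl⟩ z hz).2
end

section
/- The semigroup T_{S(I)}(X,P) is an inverse semigroup if and only if (i) S(I) is an inverse semigroup, and (ii) for each idempotent α ∈ E(S(I)), every block X_i with i in the image of α is a singleton. -/
open Function Set

theorem inverse_semigroup_iff {X I : Type*} (idx : X → I)
    (hsurj : Function.Surjective idx) (S : Set (I → I))
    (hS : ∀ α ∈ S, ∀ β ∈ S, (fun i => β (α i)) ∈ S) :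
    (∀ f, InTS idx S f →
        ∃ g, (InTS idx S g ∧ (∀ x, f (g (f x)) = f x) ∧ (∀ x, g (f (g x)) = g x)) ∧
          ∀ g', (InTS idx S g' ∧ (∀ x, f (g' (f x)) = f x) ∧ (∀ x, g' (f (g' x)) = g' x)) →
            g' = g) ↔
      ((∀ α ∈ S,
          ∃ β, (β ∈ S ∧ (∀ i, α (β (α i)) = α i) ∧ (∀ i, β (α (β i)) = β i)) ∧
            ∀ β', (β' ∈ S ∧ (∀ i, α (β' (α i)) = α i) ∧ (∀ i, β' (α (β' i)) = β' i)) →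
              β' = β) ∧
       (∀ α ∈ S, (∀ i, α (α i) = α i) →
          ∀ i ∈ Set.range α, (idx ⁻¹' {i}).Subsingleton)) := by
  
  classical
  have hrep : ∀ j, idx (Function.surjInv hsurj j) = j := fun j => Function.surjInv_eq hsurj j
  constructor
  · intro hInv
    constructor
    · -- S is an inverse semigroup
      intro α hα
      set f : X → X := fun x => Function.surjInv hsurj (α (idx x)) with hf
      have hfidx : ∀ y, idx (f y) = α (idx y) := fun y => hrep _
      obtain ⟨g, ⟨⟨β, hβS, hβchar⟩, hfgf, hgfg⟩, huniq⟩ :=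
        hInv f ⟨α, hα, fun x => (hfidx x).symm⟩
      have hgidx : ∀ y, idx (g y) = β (idx y) := fun y => (hβchar y).symm
      have h1 : ∀ i, α (β (α i)) = α i := by
        intro i
        obtain ⟨x, rfl⟩ := hsurj i
        have := congrArg idx (hfgf x)
        simpa [hfidx, hgidx] using this
      have h2 : ∀ i, β (α (β i)) = β i := by
        intro i
        obtain ⟨x, rfl⟩ := hsurj i
        have := congrArg idx (hgfg x)
        simpa [hfidx, hgidx] using this
      refine ⟨β, ⟨hβS, h1, h2⟩, ?_⟩
      rintro β' ⟨hβ'S, h1', h2'⟩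
      have haux : ∀ γ : I → I, γ ∈ S → (∀ i, α (γ (α i)) = α i) → (∀ i, γ (α (γ i)) = γ i) →
          (fun x => Function.surjInv hsurj (γ (idx x))) = g := by
        intro γ hγS hg1 hg2
        apply huniq
        refine ⟨⟨γ, hγS, fun x => (hrep _).symm⟩, ?_, ?_⟩
        · intro x
          simp only [hf, hrep, hg1]
        · intro x
          simp only [hf, hrep, hg2]
      have e1 := haux β' hβ'S h1' h2'
      have e2 := haux β hβS h1 h2
      funext i
      obtain ⟨x, rfl⟩ := hsurj i
      have := congrArg (fun h : X → X => idx (h x)) (e1.trans e2.symm)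
      simpa [hrep] using this
    · -- singleton blocks on ranges of idempotents
      intro α hα hidem i hi a ha b hb
      obtain ⟨i₀, rfl⟩ := hi
      have hia : idx a = α i₀ := ha
      have hib : idx b = α i₀ := hb
      set rep : I → X := fun j => if j = α i₀ then a else Function.surjInv hsurj j with hrepdef
      set rep' : I → X := fun j => if j = α i₀ then b else Function.surjInv hsurj j with hrep'def
      have hrepidx : ∀ j, idx (rep j) = j := by
        intro j
        simp only [hrepdef]
        split_ifs with h
        · rw [hia, h]
        · exact hrep j
      have hrep'idx : ∀ j, idx (rep' j) = j := by
        intro j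
        simp only [hrep'def]
        split_ifs with h
        · rw [hib, h]
        · exact hrep j
      set f : X → X := fun x => rep (α (idx x)) with hf
      set g' : X → X := fun x => rep' (α (idx x)) with hg'
      have hff : ∀ x, f (f x) = f x := by
        intro x
        simp only [hf, hrepidx, hidem]
      obtain ⟨g, _, huniq⟩ := hInv f ⟨α, hα, fun x => (hrepidx _).symm⟩
      have hfg : f = g :=
        huniq f ⟨⟨α, hα, fun x => (hrepidx _).symm⟩,
          fun x => by rw [hff (f x), hff x], fun x => by rw [hff (f x), hff x]⟩
      have hg'g : g' = g := by
        apply huniq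
        refine ⟨⟨α, hα, fun x => (hrep'idx _).symm⟩, ?_, ?_⟩
        · intro x
          simp only [hf, hg', hrepidx, hrep'idx, hidem]
        · intro x
          simp only [hf, hg', hrepidx, hrep'idx, hidem]
      obtain ⟨x₀, hx₀⟩ := hsurj i₀
      have hfx₀ : f x₀ = a := by
        simp [hf, hx₀, hrepdef]
      have hg'x₀ : g' x₀ = b := by
        simp [hg', hx₀, hrep'def]
      have : f x₀ = g' x₀ := by rw [hfg.trans hg'g.symm]
      rw [hfx₀, hg'x₀] at this
      exact this
  · rintro ⟨hi, hii⟩ f ⟨c, hcS, hcchar⟩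
    obtain ⟨d, ⟨hdS, hcdc, hdcd⟩, hduniq⟩ := hi c hcS
    have hfidx : ∀ y, idx (f y) = c (idx y) := fun y => (hcchar y).symm
    have sub1 : ∀ i, (idx ⁻¹' {c i}).Subsingleton := fun i =>
      hii (fun j => c (d j)) (hS d hdS c hcS) (fun j => hcdc (d j)) (c i) ⟨c i, hcdc i⟩
    have sub2 : ∀ i, (idx ⁻¹' {d i}).Subsingleton := fun i =>
      hii (fun j => d (c j)) (hS c hcS d hdS) (fun j => hdcd (c j)) (d i) ⟨d i, hdcd i⟩
    set g : X → X := fun x => Function.surjInv hsurj (d (idx x)) with hg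
    have hgidx : ∀ y, idx (g y) = d (idx y) := fun y => hrep _
    have key1 : ∀ x, f (g (f x)) = f x := by
      intro x
      have m1 : f (g (f x)) ∈ idx ⁻¹' {c (idx x)} := by
        simp only [Set.mem_preimage, Set.mem_singleton_iff, hfidx, hgidx]
        exact hcdc _
      have m2 : f x ∈ idx ⁻¹' {c (idx x)} := by
        simp only [Set.mem_preimage, Set.mem_singleton_iff, hfidx]
      exact sub1 (idx x) m1 m2
    have key2 : ∀ x, g (f (g x)) = g x := by
      intro x
      have m1 : g (f (g x)) ∈ idx ⁻¹' {d (idx x)} := by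
        simp only [Set.mem_preimage, Set.mem_singleton_iff, hfidx, hgidx]
        exact hdcd _
      have m2 : g x ∈ idx ⁻¹' {d (idx x)} := by
        simp only [Set.mem_preimage, Set.mem_singleton_iff, hgidx]
      exact sub2 (idx x) m1 m2
    refine ⟨g, ⟨⟨d, hdS, fun x => (hgidx x).symm⟩, key1, key2⟩, ?_⟩
    rintro g' ⟨⟨d', hd'S, hd'char⟩, hfg'f, hg'fg'⟩
    have hg'idx : ∀ y, idx (g' y) = d' (idx y) := fun y => (hd'char y).symm
    have e1 : ∀ i, c (d' (c i)) = c i := by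
      intro i
      obtain ⟨x, rfl⟩ := hsurj i
      have := congrArg idx (hfg'f x)
      simpa [hfidx, hg'idx] using this
    have e2 : ∀ i, d' (c (d' i)) = d' i := by
      intro i
      obtain ⟨x, rfl⟩ := hsurj i
      have := congrArg idx (hg'fg' x)
      simpa [hfidx, hg'idx] using this
    have hd'd : d' = d := hduniq d' ⟨hd'S, e1, e2⟩
    funext x
    have m1 : g' x ∈ idx ⁻¹' {d (idx x)} := by
      simp only [Set.mem_preimage, Set.mem_singleton_iff, hg'idx, hd'd]
    have m2 : g x ∈ idx ⁻¹' {d (idx x)} := by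
      simp only [Set.mem_preimage, Set.mem_singleton_iff, hgidx]
    exact sub2 (idx x) m1 m2
end

section
/- Assume id_I ∈ S(I). Let f ∈ T_{S(I)}(X,P). Then f is unit-regular in T_{S(I)}(X,P) (i.e., fuf = f for some unit u of T_{S(I)}(X,P)) if and only if there exists a unit α of S(I) such that: (i) χ^(f) α χ^(f) = χ^(f); (ii) X_i ∩ Xf ⊆ X_{iα} f for all i in the image of χ^(f); (iii) |X_i| = |X_{iα}| for all i ∈ I; and (iv) c(f↾X_{iα}) = d(f↾X_{iα}) for all i in the image of χ^(f), where f↾X_{iα} is regarded as a map X_{iα} → X_i, c denotes the collapse (cardinality of the complement of a transversal of the kernel) and d the defect (cardinality of the complement of the image). -/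
open Function Set

theorem aux_e_congr {X I : Type*} {idx : X → I} {α : I → I}
    (e : ∀ i, ↥(idx ⁻¹' {i}) ≃ ↥(idx ⁻¹' ({α i} : Set I)))
    {j k : I} (h : j = k) (w : X) (hj : w ∈ idx ⁻¹' {j}) (hk : w ∈ idx ⁻¹' {k}) :
    ((e j ⟨w, hj⟩ : X)) = ((e k ⟨w, hk⟩ : X)) := by subst h; rfl

theorem aux_esymm_congr {X I : Type*} {idx : X → I} {α : I → I}
    (e : ∀ i, ↥(idx ⁻¹' {i}) ≃ ↥(idx ⁻¹' ({α i} : Set I)))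
    {j k : I} (h : j = k) (w : X) (hj : w ∈ idx ⁻¹' {α j}) (hk : w ∈ idx ⁻¹' {α k}) :
    (((e j).symm ⟨w, hj⟩ : X)) = (((e k).symm ⟨w, hk⟩ : X)) := by subst h; rfl

theorem unit_regular_element_iff {X I : Type*} (idx : X → I)
    (hsurj : Function.Surjective idx) (S : Set (I → I))
    (hS : ∀ α ∈ S, ∀ β ∈ S, (fun i => β (α i)) ∈ S)
    (hid : (id : I → I) ∈ S)
    (f : X → X) (cf : I → I) (hf : IsChar idx f cf) (hcf : cf ∈ S) :
    (∃ u, IsUnitTS idx S u ∧ ∀ x, f (u (f x)) = f x) ↔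
      ∃ α, IsUnitS S α ∧
        (∀ i, cf (α (cf i)) = cf i) ∧
        (∀ i ∈ Set.range cf, idx ⁻¹' {i} ∩ Set.range f ⊆ f '' (idx ⁻¹' {α i})) ∧
        (∀ i : I, Cardinal.mk ↥(idx ⁻¹' {i}) = Cardinal.mk ↥(idx ⁻¹' {α i})) ∧
        (∀ i ∈ Set.range cf, ∃ T ⊆ idx ⁻¹' {α i},
          (∀ a ∈ idx ⁻¹' {α i}, ∃! t, t ∈ T ∧ f t = f a) ∧
          Cardinal.mk ↥(idx ⁻¹' {α i} \ T) =
            Cardinal.mk ↥(idx ⁻¹' {i} \ (f '' (idx ⁻¹' {α i})))) := by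
  constructor
  · rintro ⟨u, ⟨⟨cu, hcuS, hcu⟩, v, ⟨cv, hcvS, hcv⟩, hvu, huv⟩, hfuf⟩
    have hβα : ∀ i, cv (cu i) = i := by
      intro i; obtain ⟨x, rfl⟩ := hsurj i
      rw [hcu, hcv, hvu]
    have hαβ : ∀ i, cu (cv i) = i := by
      intro i; obtain ⟨x, rfl⟩ := hsurj i
      rw [hcv, hcu, huv]
    have hone : ∀ i, cf (cu (cf i)) = cf i := by
      intro i; obtain ⟨x, rfl⟩ := hsurj i
      rw [hf, hcu, hf, hfuf, ← hf]
    refine ⟨cu, ⟨hcuS, cv, hcvS, hβα, hαβ⟩, hone, ?_, ?_, ?_⟩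
    · rintro i hi x ⟨hx1, y, rfl⟩
      refine ⟨u (f y), ?_, hfuf y⟩
      show idx (u (f y)) = cu i
      rw [← hcu, hx1]
    · intro i
      refine Cardinal.mk_congr ⟨fun x => ⟨u x, ?_⟩, fun y => ⟨v y, ?_⟩, ?_, ?_⟩
      · show idx (u (x : X)) = cu i
        rw [← hcu, x.2]
      · show idx (v (y : X)) = i
        rw [← hcv, y.2, hβα]
      · intro x; exact Subtype.ext (hvu x)
      · intro y; exact Subtype.ext (huv y)
    · rintro i hi
      have hcfα : cf (cu i) = i := by obtain ⟨j, rfl⟩ := hi; exact hone j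
      refine ⟨u '' (f '' (idx ⁻¹' {cu i})), ?_, ?_, ?_⟩
      · rintro _ ⟨_, ⟨a, ha, rfl⟩, rfl⟩
        show idx (u (f a)) = cu i
        rw [← hcu, ← hf, show idx a = cu i from ha, hcfα]
      · intro a ha
        refine ⟨u (f a), ⟨⟨f a, ⟨a, ha, rfl⟩, rfl⟩, hfuf a⟩, ?_⟩
        rintro _ ⟨⟨_, ⟨a', ha', rfl⟩, rfl⟩, hft⟩
        have : f a' = f a := by rw [← hfuf a']; exact hft
        rw [this]
      · refine Cardinal.mk_congr ⟨fun x => ⟨v x, ?_, ?_⟩, fun y => ⟨u y, ?_, ?_⟩, ?_, ?_⟩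
        · show idx (v (x : X)) = i
          rw [← hcv, x.2.1, hβα]
        · rintro ⟨a, ha, hfa⟩
          exact x.2.2 ⟨f a, ⟨a, ha, rfl⟩, by rw [hfa, huv]⟩
        · show idx (u (y : X)) = cu i
          rw [← hcu, y.2.1]
        · rintro ⟨w, hw, hwy⟩
          have : w = (y : X) := by rw [← hvu w, hwy, hvu]
          exact y.2.2 (this ▸ hw)
        · intro x; exact Subtype.ext (huv x)
        · intro y; exact Subtype.ext (hvu y)
  · classical
    rintro ⟨α, ⟨hαS, β, hβS, hβα, hαβ⟩, hone, htwo, hthree, hfour⟩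
    have key : ∀ i : I, ∃ e : ↥(idx ⁻¹' {i}) ≃ ↥(idx ⁻¹' ({α i} : Set I)),
        ∀ _ : i ∈ Set.range cf, ∀ w : ↥(idx ⁻¹' {i}), (w : X) ∈ Set.range f →
          f (e w) = w := by
      intro i
      by_cases hi : i ∈ Set.range cf
      · obtain ⟨T, hT, htr, hcard⟩ := hfour i hi
        have hcfα : cf (α i) = i := by obtain ⟨j, rfl⟩ := hi; exact hone j
        have hfsub : f '' (idx ⁻¹' {α i}) = idx ⁻¹' {i} ∩ Set.range f := by
          apply Subset.antisymm
          · rintro _ ⟨a, ha, rfl⟩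
            exact ⟨show idx (f a) = i by
              rw [← hf a, show idx a = α i from ha, hcfα], ⟨a, rfl⟩⟩
          · exact htwo i hi
        have hs : ∀ y : ↥(idx ⁻¹' {i} ∩ Set.range f), ∃! t, t ∈ T ∧ f t = (y : X) := by
          intro y
          have hy : (y : X) ∈ f '' (idx ⁻¹' {α i}) := by rw [hfsub]; exact y.2
          obtain ⟨a, ha, hay⟩ := hy
          have := htr a ha
          rwa [hay] at this
        choose s hsp using hs
        have hsmem : ∀ y, s y ∈ T := fun y => (hsp y).1.1
        have hsf : ∀ y, f (s y) = (y : X) := fun y => (hsp y).1.2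
        have hfA : ∀ t : ↥T, f (t : X) ∈ idx ⁻¹' {i} ∩ Set.range f := by
          intro t
          rw [← hfsub]
          exact ⟨(t : X), hT t.2, rfl⟩
        obtain ⟨sA, hsAf⟩ : ∃ sA : ↥(idx ⁻¹' {i} ∩ Set.range f) ≃ ↥T,
            ∀ y, f ((sA y : X)) = (y : X) := by
          refine ⟨⟨fun y => ⟨s y, hsmem y⟩, fun t => ⟨f (t : X), hfA t⟩, ?_, ?_⟩, hsf⟩
          · intro y; exact Subtype.ext (hsf y)
          · intro t
            exact Subtype.ext ((hsp ⟨f (t : X), hfA t⟩).2 (t : X) ⟨t.2, rfl⟩).symm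
        have hA : idx ⁻¹' {i} ∩ Set.range f ⊆ idx ⁻¹' {i} := inter_subset_left
        have hcard' : Cardinal.mk ↥(idx ⁻¹' {i} \ (idx ⁻¹' {i} ∩ Set.range f)) =
            Cardinal.mk ↥(idx ⁻¹' {α i} \ T) := by
          rw [← hfsub]; exact hcard.symm
        obtain ⟨ec⟩ := Cardinal.eq.mp hcard'
        refine ⟨(Equiv.Set.sumDiffSubset hA).symm.trans
          ((Equiv.sumCongr sA ec).trans (Equiv.Set.sumDiffSubset hT)), ?_⟩
        intro _ w hw
        have hwA : (w : X) ∈ idx ⁻¹' {i} ∩ Set.range f := ⟨w.2, hw⟩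
        rw [Equiv.trans_apply, Equiv.trans_apply,
          Equiv.Set.sumDiffSubset_symm_apply_of_mem hA hwA,
          Equiv.sumCongr_apply, Sum.map_inl, Equiv.Set.sumDiffSubset_apply_inl,
          Set.coe_inclusion]
        exact hsAf ⟨w, hwA⟩
      · obtain ⟨e⟩ := Cardinal.eq.mp (hthree i)
        exact ⟨e, fun h => absurd h hi⟩
    choose e he using key
    set u : X → X := fun x => ((e (idx x) ⟨x, rfl⟩ : ↥(idx ⁻¹' {α (idx x)})) : X) with hu
    set v : X → X := fun y =>
      (((e (β (idx y))).symm ⟨y, (hαβ (idx y)).symm⟩ : ↥(idx ⁻¹' {β (idx y)})) : X) with hv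
    have hu_idx : ∀ x, idx (u x) = α (idx x) := fun x => (e (idx x) ⟨x, rfl⟩).2
    have hv_idx : ∀ y, idx (v y) = β (idx y) := fun y => ((e (β (idx y))).symm _).2
    have hvu : ∀ x, v (u x) = x := by
      intro x
      have h : β (idx (u x)) = idx x := by rw [hu_idx, hβα]
      have step : v (u x) = (((e (idx x)).symm ⟨u x, hu_idx x⟩ : ↥(idx ⁻¹' {idx x})) : X) :=
        aux_esymm_congr e h (u x) ((hαβ (idx (u x))).symm) (hu_idx x)
      rw [step]
      have : (⟨u x, hu_idx x⟩ : ↥(idx ⁻¹' {α (idx x)})) = e (idx x) ⟨x, rfl⟩ :=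
        Subtype.ext rfl
      rw [this, Equiv.symm_apply_apply]
    have huv : ∀ y, u (v y) = y := by
      intro y
      have step : u (v y) = ((e (β (idx y)) ⟨v y, hv_idx y⟩ : X)) :=
        aux_e_congr e (hv_idx y) (v y) rfl (hv_idx y)
      rw [step]
      have : (⟨v y, hv_idx y⟩ : ↥(idx ⁻¹' {β (idx y)})) =
          (e (β (idx y))).symm ⟨y, (hαβ (idx y)).symm⟩ := Subtype.ext rfl
      rw [this, Equiv.apply_symm_apply]
    refine ⟨u, ⟨⟨α, hαS, fun x => (hu_idx x).symm⟩, v, ⟨β, hβS, fun y => (hv_idx y).symm⟩,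
      hvu, huv⟩, ?_⟩
    intro x
    exact he (idx (f x)) ⟨idx x, hf x⟩ ⟨f x, rfl⟩ ⟨x, rfl⟩
end

section
/- Assume id_I ∈ S(I). The semigroup T_{S(I)}(X,P) is unit-regular if and only if: (i) S(I) is unit-regular; (ii) for each unit α of S(I), |X_i| = |X_{iα}| for all i ∈ I; (iii) every block X_i is finite; and (iv) for each β ∈ S(I), whenever |i β^{-1}| ≥ 2 for some i ∈ I, the block X_i is a singleton. -/
open Function Set

lemma exists_inj_not_surj (A : Type*) [Infinite A] :
    ∃ h : A → A, Injective h ∧ ¬ Surjective h := by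
  have hm : (Cardinal.mk (Option A)) = Cardinal.mk A := by
    rw [Cardinal.mk_option, Cardinal.add_one_eq (Cardinal.aleph0_le_mk A)]
  obtain ⟨e⟩ := Cardinal.eq.1 hm
  refine ⟨fun a => e (some a), fun a b hab => ?_, fun hs => ?_⟩
  · simpa using e.injective hab
  · obtain ⟨a, ha⟩ := hs (e none)
    exact (Option.some_ne_none a) (e.injective ha)

lemma extend_bijOn {X : Type*} {A B D : Set X} (hA : A.Finite) (hB : B.Finite)
    (hcard : A.ncard = B.ncard) (hD : D ⊆ A) {p : X → X}
    (hmap : MapsTo p D B) (hinj : InjOn p D) :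
    ∃ g : X → X, BijOn g A B ∧ EqOn g p D := by
  have hDfin : D.Finite := hA.subset hD
  have hPD : p '' D ⊆ B := hmap.image_subset
  have hc2 : (A \ D).ncard = (B \ (p '' D)).ncard := by
    rw [Set.ncard_diff hD hDfin, Set.ncard_diff hPD (hDfin.image p),
      Set.ncard_image_of_injOn hinj, hcard]
  haveI := (hA.diff : (A \ D).Finite).to_subtype
  haveI := (hB.diff : (B \ (p '' D)).Finite).to_subtype
  obtain ⟨e⟩ : Nonempty (↥(A \ D) ≃ ↥(B \ (p '' D))) := by
    rw [← Finite.card_eq, Nat.card_coe_set_eq, Nat.card_coe_set_eq, hc2]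
  classical
  refine ⟨fun x => if hx : x ∈ D then p x else if hx' : x ∈ A \ D then (e ⟨x, hx'⟩ : X) else x,
    ⟨?_, ?_, ?_⟩, fun x hx => by simp [hx]⟩
  · intro x hxA
    by_cases hx : x ∈ D
    · simpa [hx] using hmap hx
    · simp only [dif_neg hx, dif_pos (show x ∈ A \ D from ⟨hxA, hx⟩)]
      exact ((e ⟨x, ⟨hxA, hx⟩⟩).2).1
  · intro x hxA y hyA hxy
    by_cases hx : x ∈ D <;> by_cases hy : y ∈ D
    · exact hinj hx hy (by simpa [hx, hy] using hxy)
    · exfalso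
      simp only [dif_pos hx, dif_neg hy, dif_pos (show y ∈ A \ D from ⟨hyA, hy⟩)] at hxy
      exact ((e ⟨y, ⟨hyA, hy⟩⟩).2).2 ⟨x, hx, hxy⟩
    · exfalso
      simp only [dif_pos hy, dif_neg hx, dif_pos (show x ∈ A \ D from ⟨hxA, hx⟩)] at hxy
      exact ((e ⟨x, ⟨hxA, hx⟩⟩).2).2 ⟨y, hy, hxy.symm⟩
    · simp only [dif_neg hx, dif_pos (show x ∈ A \ D from ⟨hxA, hx⟩), dif_neg hy,
        dif_pos (show y ∈ A \ D from ⟨hyA, hy⟩)] at hxy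
      have := e.injective (Subtype.ext hxy)
      exact congrArg Subtype.val this
  · intro y hyB
    by_cases hy : y ∈ p '' D
    · obtain ⟨x, hxD, rfl⟩ := hy
      exact ⟨x, hD hxD, by simp [hxD]⟩
    · refine ⟨(e.symm ⟨y, hyB, hy⟩ : X), (e.symm ⟨y, hyB, hy⟩).2.1, ?_⟩
      simp only [dif_neg (e.symm ⟨y, hyB, hy⟩).2.2, dif_pos (e.symm ⟨y, hyB, hy⟩).2]
      rw [show (⟨(e.symm ⟨y, hyB, hy⟩ : X), (e.symm ⟨y, hyB, hy⟩).2⟩ : ↥(A \ D)) = e.symm ⟨y, hyB, hy⟩ from rfl, e.apply_symm_apply]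

lemma unit_struct {X I : Type*} {idx : X → I} (hsurj : Surjective idx) {S : Set (I → I)}
    {u : X → X} (h : IsUnitTS idx S u) :
    ∃ γ δ v, γ ∈ S ∧ δ ∈ S ∧ IsChar idx u γ ∧ IsChar idx v δ ∧
      (∀ i, δ (γ i) = i) ∧ (∀ i, γ (δ i) = i) ∧ (∀ x, v (u x) = x) ∧ (∀ x, u (v x) = x) := by
  obtain ⟨⟨γ, hγS, hγ⟩, v, ⟨δ, hδS, hδ⟩, hvu, huv⟩ := h
  refine ⟨γ, δ, v, hγS, hδS, hγ, hδ, ?_, ?_, hvu, huv⟩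
  · intro i; obtain ⟨x, rfl⟩ := hsurj i
    calc δ (γ (idx x)) = δ (idx (u x)) := by rw [hγ]
      _ = idx (v (u x)) := hδ _
      _ = idx x := by rw [hvu]
  · intro i; obtain ⟨x, rfl⟩ := hsurj i
    calc γ (δ (idx x)) = γ (idx (v x)) := by rw [hδ]
      _ = idx (u (v x)) := hγ _
      _ = idx x := by rw [huv]

theorem unit_regular_semigroup_iff {X I : Type*} (idx : X → I)
    (hsurj : Function.Surjective idx) (S : Set (I → I))
    (hS : ∀ α ∈ S, ∀ β ∈ S, (fun i => β (α i)) ∈ S)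
    (hid : (id : I → I) ∈ S) :
    (∀ f, InTS idx S f → ∃ u, IsUnitTS idx S u ∧ ∀ x, f (u (f x)) = f x) ↔
      ((∀ β ∈ S, ∃ α, IsUnitS S α ∧ ∀ i, β (α (β i)) = β i) ∧
       (∀ α, IsUnitS S α → ∀ i : I,
          Cardinal.mk ↥(idx ⁻¹' {i}) = Cardinal.mk ↥(idx ⁻¹' {α i})) ∧
       (∀ i : I, (idx ⁻¹' {i}).Finite) ∧
       (∀ β ∈ S, ∀ i : I, (∃ j k, j ≠ k ∧ β j = i ∧ β k = i) →
          (idx ⁻¹' {i}).Subsingleton)) := by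
  classical
  constructor
  · intro hreg
    have hsurj' := hsurj
    choose s hs using hsurj'
    refine ⟨?_, ?_, ?_, ?_⟩
    -- (i) S is unit-regular
    · intro β hβ
      obtain ⟨u, hu, hfuf⟩ := hreg (fun x => s (β (idx x))) ⟨β, hβ, fun x => (hs _).symm⟩
      obtain ⟨γ, δ, v, hγS, hδS, hγ, hδ, hδγ, hγδ, hvu, huv⟩ := unit_struct hsurj hu
      refine ⟨γ, ⟨hγS, δ, hδS, hδγ, hγδ⟩, fun i => ?_⟩
      have h1 : s (β (idx (u (s (β (idx (s i))))))) = s (β (idx (s i))) := hfuf (s i)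
      have h2 := congrArg idx h1
      simp only [hs] at h2
      rw [← hγ] at h2
      simp only [hs] at h2
      exact h2
    -- (ii) units preserve block sizes
    · intro α hα i
      obtain ⟨hαS, α', hα'S, hl, hr⟩ := hα
      obtain ⟨u, hu, hfuf⟩ := hreg (fun x => s (α (idx x))) ⟨α, hαS, fun x => (hs _).symm⟩
      obtain ⟨γ, δ, v, hγS, hδS, hγ, hδ, hδγ, hγδ, hvu, huv⟩ := unit_struct hsurj hu
      have hγα : ∀ j, γ (α j) = j := by
        intro j
        have h1 : s (α (idx (u (s (α (idx (s j))))))) = s (α (idx (s j))) := hfuf (s j)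
        have h2 := congrArg idx h1
        simp only [hs] at h2
        rw [← hγ] at h2
        simp only [hs] at h2
        have h3 := congrArg α' h2
        rwa [hl, hl] at h3
      have hδα : ∀ j, δ j = α j := by
        intro j
        calc δ j = δ (γ (α j)) := by rw [hγα]
          _ = α j := hδγ _
      refine Cardinal.mk_congr ⟨fun x => ⟨v x.1, ?_⟩, fun y => ⟨u y.1, ?_⟩, ?_, ?_⟩
      · have hx : idx x.1 = i := x.2
        show idx (v x.1) = α i
        rw [← hδ, hx, hδα]
      · have hy : idx y.1 = α i := y.2
        show idx (u y.1) = i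
        rw [← hγ, hy, hγα]
      · intro x; exact Subtype.ext (huv x.1)
      · intro y; exact Subtype.ext (hvu y.1)
    -- (iii) blocks are finite
    · intro i
      by_contra hfin
      have hinf : (idx ⁻¹' {i}).Infinite := hfin
      haveI := hinf.to_subtype
      obtain ⟨h', hinj', hnsurj'⟩ := exists_inj_not_surj ↥(idx ⁻¹' {i})
      set f : X → X := fun x => if hx : idx x = i then ((h' ⟨x, hx⟩ : ↥(idx ⁻¹' {i})) : X) else x with hfdef
      have hfc : ∀ y, idx (f y) = idx y := by
        intro y
        by_cases hy : idx y = i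
        · have h2 : idx ((h' ⟨y, hy⟩ : ↥(idx ⁻¹' {i})) : X) = i := (h' ⟨y, hy⟩).2
          simp only [hfdef, dif_pos hy]
          rw [h2, hy]
        · simp [hfdef, dif_neg hy]
      have hfchar : IsChar idx f id := fun x => (hfc x).symm
      obtain ⟨u, hu, hfuf⟩ := hreg f ⟨id, hid, hfchar⟩
      obtain ⟨γ, δ, v, hγS, hδS, hγ, hδ, hδγ, hγδ, hvu, huv⟩ := unit_struct hsurj hu
      have hγid : ∀ j, γ j = j := by
        intro j; obtain ⟨x, rfl⟩ := hsurj j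
        have h1 := congrArg idx (hfuf x)
        rw [hfc, hfc, ← hγ, hfc] at h1
        exact h1
      have humem : ∀ y, idx y = i → idx (u y) = i := by
        intro y hy
        rw [← hγ, hy, hγid]
      have key : ∀ a : ↥(idx ⁻¹' {i}), u ((h' a : ↥(idx ⁻¹' {i})) : X) = (a : X) := by
        intro a
        have ha : idx (a : X) = i := a.2
        have e1 : f (a : X) = ((h' a : ↥(idx ⁻¹' {i})) : X) := by
          simp only [hfdef, dif_pos ha]
        have hm : idx (u ((h' a : ↥(idx ⁻¹' {i})) : X)) = i := humem _ (h' a).2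
        have e2 : f (u ((h' a : ↥(idx ⁻¹' {i})) : X)) = ((h' ⟨u ((h' a : ↥(idx ⁻¹' {i})) : X), hm⟩ : ↥(idx ⁻¹' {i})) : X) := by
          simp only [hfdef, dif_pos hm]
        have h1 := hfuf (a : X)
        rw [e1, e2] at h1
        exact congrArg Subtype.val (hinj' (Subtype.ext h1))
      apply hnsurj'
      intro b
      refine ⟨⟨u (b : X), humem _ b.2⟩, ?_⟩
      have h2 := key ⟨u (b : X), humem _ b.2⟩
      have h3 := congrArg v h2
      rw [hvu, hvu] at h3
      exact Subtype.ext h3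
    -- (iv)
    · intro β hβ i hex
      obtain ⟨j, k, hjk, hbj, hbk⟩ := hex
      intro a ha b hb
      by_contra hab
      have ha' : idx a = i := ha
      have hb' : idx b = i := hb
      set f : X → X := fun x => if idx x = j then a else if idx x = k then b else s (β (idx x)) with hfdef
      have hfchar : IsChar idx f β := by
        intro x
        by_cases h1 : idx x = j
        · simp only [hfdef, if_pos h1]
          rw [h1, hbj]; exact ha'.symm
        · by_cases h2 : idx x = k
          · simp only [hfdef, if_neg h1, if_pos h2]
            rw [h2, hbk]; exact hb'.symm
          · simp only [hfdef, if_neg h1, if_neg h2]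
            exact (hs _).symm
      obtain ⟨u, hu, hfuf⟩ := hreg f ⟨β, hβ, hfchar⟩
      obtain ⟨γ, δ, v, hγS, hδS, hγ, hδ, hδγ, hγδ, hvu, huv⟩ := unit_struct hsurj hu
      have hfa : f (s j) = a := by simp [hfdef, hs]
      have hfb : f (s k) = b := by simp [hfdef, hs, Ne.symm hjk]
      have h1 := hfuf (s j); rw [hfa] at h1
      have h2 := hfuf (s k); rw [hfb] at h2
      have hia : idx (u a) = γ i := by rw [← hγ, ha']
      have hib : idx (u b) = γ i := by rw [← hγ, hb']
      by_cases hgj : γ i = j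
      · have hfb' : f (u b) = a := by simp only [hfdef, hib, if_pos hgj]
        exact hab (hfb'.symm.trans h2)
      · by_cases hgk : γ i = k
        · have hfa' : f (u a) = b := by
            simp only [hfdef, hia]
            rw [if_neg hgj, if_pos hgk]
          exact hab ((hfa'.symm.trans h1).symm)
        · have ea : f (u a) = s (β (γ i)) := by
            simp only [hfdef, hia]
            rw [if_neg hgj, if_neg hgk]
          have eb : f (u b) = s (β (γ i)) := by
            simp only [hfdef, hib]
            rw [if_neg hgj, if_neg hgk]
          exact hab (h1.symm.trans (ea.trans (eb.symm.trans h2)))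
  · rintro ⟨h1, h2, h3, h4⟩ f hf
    rcases isEmpty_or_nonempty X with hX | hX
    · exact ⟨id, ⟨⟨id, hid, fun x => rfl⟩, id, ⟨id, hid, fun x => rfl⟩,
        fun x => rfl, fun x => rfl⟩, fun x => isEmptyElim x⟩
    obtain ⟨β, hβ, hchar⟩ := hf
    obtain ⟨α, hαu, hβαβ⟩ := h1 β hβ
    obtain ⟨hαS, α', hα'S, hl, hr⟩ := hαu
    have hαinj : ∀ a b, α a = α b → a = b := fun a b hab => by rw [← hl a, hab, hl]
    -- choice of preimages
    have hstep : ∀ y : X, ∃ z, y ∈ range f → idx z = α (idx y) ∧ f z = y := by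
      intro y
      by_cases hy : y ∈ range f
      · obtain ⟨x, rfl⟩ := hy
        by_cases hc : α (idx (f x)) = idx x
        · exact ⟨x, fun _ => ⟨hc.symm, rfl⟩⟩
        · have e1 : β (α (idx (f x))) = idx (f x) := by
            rw [← hchar x]; exact hβαβ (idx x)
          have hsub : (idx ⁻¹' {idx (f x)}).Subsingleton :=
            h4 β hβ (idx (f x)) ⟨α (idx (f x)), idx x, hc, e1, hchar x⟩
          obtain ⟨z, hz⟩ := hsurj (α (idx (f x)))
          refine ⟨z, fun _ => ⟨hz, ?_⟩⟩
          have e3 : idx (f z) = idx (f x) := by rw [← hchar z, hz]; exact e1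
          exact hsub (show idx (f z) = idx (f x) from e3) (show idx (f x) = idx (f x) from rfl)
      · exact ⟨y, fun h => absurd h hy⟩
    choose p hp using hstep
    -- blockwise bijections
    have hblock : ∀ j : I, ∃ g : X → X, BijOn g (idx ⁻¹' {j}) (idx ⁻¹' {α j}) ∧
        EqOn g p (idx ⁻¹' {j} ∩ range f) := by
      intro j
      refine extend_bijOn (h3 j) (h3 (α j)) ?_ inter_subset_left ?_ ?_
      · have hc := h2 α ⟨hαS, α', hα'S, hl, hr⟩ j
        obtain ⟨e⟩ := Cardinal.eq.1 hc
        rw [← Nat.card_coe_set_eq, ← Nat.card_coe_set_eq]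
        exact Nat.card_congr e
      · rintro y ⟨hyj, hyr⟩
        have : idx y = j := hyj
        show idx (p y) = α j
        rw [(hp y hyr).1, this]
      · rintro y ⟨-, hyr⟩ y' ⟨-, hyr'⟩ hpy
        rw [← (hp y hyr).2, ← (hp y' hyr').2, hpy]
    choose G hG using hblock
    have hmemself : ∀ x : X, x ∈ idx ⁻¹' {idx x} := fun x => rfl
    set u : X → X := fun x => G (idx x) x with hudef
    have huc : ∀ x, idx (u x) = α (idx x) := fun x => (hG (idx x)).1.mapsTo (hmemself x)
    have huinj : Injective u := by
      intro x x' hxx'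
      have hi : idx x' = idx x :=
        (hαinj _ _ (by rw [← huc x, ← huc x', hxx'])).symm
      refine (hG (idx x)).1.injOn (hmemself x) (show idx x' = idx x from hi) ?_
      show G (idx x) x = G (idx x) x'
      rw [show G (idx x) x' = G (idx x') x' from by rw [hi]]
      exact hxx'
    have husurj : Surjective u := by
      intro y
      have hy : y ∈ idx ⁻¹' {α (α' (idx y))} := show idx y = α (α' (idx y)) from (hr (idx y)).symm
      obtain ⟨x, hx, hgx⟩ := (hG (α' (idx y))).1.surjOn hy
      refine ⟨x, ?_⟩
      have hxi : idx x = α' (idx y) := hx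
      show G (idx x) x = y
      rw [hxi]; exact hgx
    set v : X → X := Function.invFun u with hvdef
    have hvu : ∀ x, v (u x) = x := fun x => Function.leftInverse_invFun huinj x
    have huv : ∀ x, u (v x) = x := fun x => Function.rightInverse_invFun husurj x
    have hvc : IsChar idx v α' := by
      intro y
      have e : idx y = α (idx (v y)) := (congrArg idx (huv y)).symm.trans (huc (v y))
      show α' (idx y) = idx (v y)
      rw [e, hl]
    refine ⟨u, ⟨⟨α, hαS, fun x => (huc x).symm⟩, v, ⟨α', hα'S, hvc⟩, hvu, huv⟩, ?_⟩
    intro x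
    have hyr : f x ∈ range f := mem_range_self x
    have he : u (f x) = p (f x) := (hG (idx (f x))).2 ⟨hmemself (f x), hyr⟩
    rw [he]
    exact (hp (f x) hyr).2
end

section
/- The semigroup T(X,P) is unit-regular if and only if X is finite and the partition P is trivial. -/
open Function Set

/-- If the partition is trivial, every map preserves it. -/
lemma presP_of_trivial {X I : Type*} (idx : X → I) (hsurj : Function.Surjective idx)
    (htriv : (∀ i : I, (idx ⁻¹' {i}).Subsingleton) ∨ (∀ x y : X, idx x = idx y))
    (g : X → X) : PresP idx g := by
  rcases htriv with h | h
  · have hinj : Function.Injective idx := fun x y hxy => by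
      exact h (idx y) (by simpa [Set.mem_preimage] using hxy) rfl
    let e := Equiv.ofBijective idx ⟨hinj, hsurj⟩
    exact ⟨fun i => idx (g (e.symm i)), fun x => by
      have : e.symm (idx x) = x := e.symm_apply_apply x
      simp only [this]⟩
  · exact ⟨id, fun x => (h x (g x))⟩

theorem TXP_unit_regular_iff {X I : Type*} [Nonempty X] (idx : X → I)
    (hsurj : Function.Surjective idx) :
    (∀ f : X → X, PresP idx f →
        ∃ u, (PresP idx u ∧
              ∃ v, PresP idx v ∧ (∀ x, v (u x) = x) ∧ (∀ x, u (v x) = x)) ∧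
          ∀ x, f (u (f x)) = f x) ↔
      (Finite X ∧
        ((∀ i : I, (idx ⁻¹' {i}).Subsingleton) ∨ (∀ x y : X, idx x = idx y))) := by
  classical
  constructor
  · intro H
    have htriv : (∀ i : I, (idx ⁻¹' {i}).Subsingleton) ∨ (∀ x y : X, idx x = idx y) := by
      by_contra hc
      push_neg at hc
      obtain ⟨⟨i, hi⟩, x, y, hxy⟩ := hc
      obtain ⟨a, ha, b, hb, hab⟩ := hi
      have hia : idx a = i := ha
      have hib : idx b = i := hb
      -- a z with idx z ≠ idx a
      obtain ⟨z, hz⟩ : ∃ z, idx z ≠ idx a := by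
        by_cases h1 : idx x = idx a
        · exact ⟨y, fun h2 => hxy (h1.trans h2.symm)⟩
        · exact ⟨x, h1⟩
      set f : X → X := fun w => if idx w = idx a then a else b with hf
      have hfa : ∀ w, idx (f w) = idx a := by
        intro w
        show idx (if idx w = idx a then a else b) = idx a
        by_cases h : idx w = idx a
        · rw [if_pos h]
        · rw [if_neg h, hib, hia]
      obtain ⟨u, ⟨⟨cu, hcu⟩, -⟩, hreg⟩ := H f ⟨fun _ => idx a, fun w => (hfa w).symm⟩
      have hfw : ∀ w, f w = a ↔ idx w = idx a := by
        intro w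
        show (if idx w = idx a then a else b) = a ↔ idx w = idx a
        by_cases h : idx w = idx a
        · simp [if_pos h, h]
        · rw [if_neg h]
          exact ⟨fun hba => absurd hba.symm hab, fun hh => absurd hh h⟩
      -- from x = a : u a stays in the block of a
      have h1 : idx (u a) = idx a := by
        have := hreg a
        rw [show f a = a from (hfw a).2 rfl] at this
        exact (hfw (u a)).1 this
      -- from x = z : u b leaves the block of a
      have h2 : idx (u b) ≠ idx a := by
        have := hreg z
        rw [show f z = b from if_neg hz] at this
        intro hb2
        have : f (u b) = a := (hfw (u b)).2 hb2
        rw [this] at *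
        -- f (u (f z)) = f z i.e. f (u b) = b, but f (u b) = a
        have h3 := hreg z
        rw [show f z = b from if_neg hz, (hfw (u b)).2 hb2] at h3
        exact hab h3
      have e1 : cu (idx a) = idx (u a) := hcu a
      have e2 : cu (idx b) = idx (u b) := hcu b
      rw [hia] at e1
      rw [hib] at e2
      exact h2 (e2 ▸ e1 ▸ h1)
    refine ⟨?_, htriv⟩
    by_contra hfin
    have : Infinite X := not_finite_iff_infinite.mp hfin
    let e := Infinite.natEmbedding X
    set f : X → X := fun x => if h : x ∈ Set.range e then e (h.choose + 1) else x with hf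
    have hval : ∀ n : ℕ, f (e n) = e (n + 1) := by
      intro n
      have hm : e n ∈ Set.range e := ⟨n, rfl⟩
      have : hm.choose = n := e.injective hm.choose_spec
      simp [hf, dif_pos hm, this]
    have hinj : Function.Injective f := by
      intro x y hxy
      by_cases hx : x ∈ Set.range e <;> by_cases hy : y ∈ Set.range e
      · rw [hf] at hxy
        simp only [dif_pos hx, dif_pos hy] at hxy
        have := e.injective hxy
        rw [← hx.choose_spec, ← hy.choose_spec, Nat.succ_injective this]
      · exfalso; rw [hf] at hxy; simp only [dif_pos hx, dif_neg hy] at hxy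
        exact hy (hxy ▸ ⟨_, rfl⟩)
      · exfalso; rw [hf] at hxy; simp only [dif_neg hx, dif_pos hy] at hxy
        exact hx (hxy.symm ▸ ⟨_, rfl⟩)
      · rw [hf] at hxy; simpa only [dif_neg hx, dif_neg hy] using hxy
    have hnsurj : e 0 ∉ Set.range f := by
      rintro ⟨x, hx⟩
      by_cases h : x ∈ Set.range e
      · rw [hf] at hx; simp only [dif_pos h] at hx
        exact Nat.succ_ne_zero _ (e.injective hx)
      · rw [hf] at hx; simp only [dif_neg h] at hx
        exact h (hx ▸ ⟨0, rfl⟩)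
    obtain ⟨u, ⟨-, v, -, hvu, huv⟩, hreg⟩ := H f (presP_of_trivial idx hsurj htriv f)
    have huf : ∀ x, u (f x) = x := fun x => hinj (hreg x)
    have hfv : ∀ x, f x = v x := fun x => by
      conv_rhs => rw [← huf x]
      rw [hvu]
    exact hnsurj ⟨u (e 0), by rw [hfv, hvu]⟩
  · rintro ⟨hfin, htriv⟩ f -
    -- section of f on its range
    let s : ↥(Set.range f) → X := fun y => y.2.choose
    have hsec : ∀ y : ↥(Set.range f), f (s y) = (y : X) := fun y => y.2.choose_spec
    have hsinj : Function.Injective s := by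
      intro y1 y2 h
      apply Subtype.ext
      rw [← hsec y1, ← hsec y2]
      exact congrArg f h
    let eq := Equiv.ofInjective s hsinj
    let u := eq.extendSubtype
    refine ⟨u, ⟨presP_of_trivial idx hsurj htriv u,
      u.symm, presP_of_trivial idx hsurj htriv u.symm,
      fun x => u.symm_apply_apply x, fun x => u.apply_symm_apply x⟩, ?_⟩
    intro x
    have hm : f x ∈ Set.range f := ⟨x, rfl⟩
    have : u (f x) = s ⟨f x, hm⟩ := by
      rw [show u (f x) = (eq ⟨f x, hm⟩ : X) from eq.extendSubtype_apply_of_mem (f x) hm]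
      simp [eq]
    rw [this, hsec ⟨f x, hm⟩]
end

section
/- Assume id_I ∈ S(I). For f, g ∈ T_{S(I)}(X,P): L_f ≤ L_g in T_{S(I)}(X,P) (i.e., f ∈ T_{S(I)}(X,P)^1 g, equivalently f = hg for some h in the monoid) if and only if there exists α ∈ S(I) with χ^(f) = α χ^(g) and X_i f ⊆ X_{iα} g for all i ∈ I. -/
open Function Set

theorem L_preorder_iff {X I : Type*} (idx : X → I)
    (hsurj : Function.Surjective idx) (S : Set (I → I))
    (hS : ∀ α ∈ S, ∀ β ∈ S, (fun i => β (α i)) ∈ S)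
    (hid : (id : I → I) ∈ S)
    (f g : X → X) (cf cg : I → I)
    (hf : IsChar idx f cf) (hcf : cf ∈ S)
    (hg : IsChar idx g cg) (hcg : cg ∈ S) :
    (∃ h, InTS idx S h ∧ ∀ x, g (h x) = f x) ↔
      ∃ α ∈ S, (∀ i, cg (α i) = cf i) ∧
        ∀ i : I, f '' (idx ⁻¹' {i}) ⊆ g '' (idx ⁻¹' {α i}) := by
  constructor
  · rintro ⟨h, ⟨ch, hchS, hch⟩, hgh⟩
    refine ⟨ch, hchS, ?_, ?_⟩
    · intro i
      obtain ⟨x, rfl⟩ := hsurj i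
      rw [hch x, hg (h x), hgh x, ← hf x]
    · rintro i y ⟨x, hx, rfl⟩
      simp only [mem_preimage, mem_singleton_iff] at hx
      exact ⟨h x, by simp [mem_preimage, ← hch x, hx], hgh x⟩
  · rintro ⟨α, hαS, hαcg, hsub⟩
    have key : ∀ x : X, ∃ y, idx y = α (idx x) ∧ g y = f x := by
      intro x
      obtain ⟨y, hy, hgy⟩ := hsub (idx x) ⟨x, rfl, rfl⟩
      exact ⟨y, hy, hgy⟩
    choose h hh1 hh2 using key
    refine ⟨h, ⟨α, hαS, fun x => (hh1 x).symm⟩, hh2⟩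
end

section
/- Assume id_I ∈ S(I). For f, g ∈ T_{S(I)}(X,P): (f,g) ∈ L (Green's L-relation) in T_{S(I)}(X,P) if and only if there exist α, β ∈ S(I) such that χ^(f) = α χ^(g), χ^(g) = β χ^(f), X_i f ⊆ X_{iα} g for all i ∈ I, and X_i g ⊆ X_{iβ} f for all i ∈ I. -/
open Function Set

theorem L_related_iff {X I : Type*} (idx : X → I)
    (hsurj : Function.Surjective idx) (S : Set (I → I))
    (hS : ∀ α ∈ S, ∀ β ∈ S, (fun i => β (α i)) ∈ S)
    (hid : (id : I → I) ∈ S)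
    (f g : X → X) (cf cg : I → I)
    (hf : IsChar idx f cf) (hcf : cf ∈ S)
    (hg : IsChar idx g cg) (hcg : cg ∈ S) :
    ((∃ h, InTS idx S h ∧ ∀ x, g (h x) = f x) ∧
     (∃ k, InTS idx S k ∧ ∀ x, f (k x) = g x)) ↔
      ∃ α ∈ S, ∃ β ∈ S,
        ((∀ i, cg (α i) = cf i) ∧ (∀ i, cf (β i) = cg i)) ∧
        ((∀ i : I, f '' (idx ⁻¹' {i}) ⊆ g '' (idx ⁻¹' {α i})) ∧
         (∀ i : I, g '' (idx ⁻¹' {i}) ⊆ f '' (idx ⁻¹' {β i}))) := by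
  constructor
  · rintro ⟨⟨h, ⟨ch, hchS, hch⟩, hgh⟩, ⟨k, ⟨ck, hckS, hck⟩, hfk⟩⟩
    refine ⟨ch, hchS, ck, hckS, ⟨?_, ?_⟩, ?_, ?_⟩
    · intro i
      obtain ⟨x, rfl⟩ := hsurj i
      rw [hch, hg, hgh, ← hf]
    · intro i
      obtain ⟨x, rfl⟩ := hsurj i
      rw [hck, hf, hfk, ← hg]
    · rintro i y ⟨x, hx, rfl⟩
      exact ⟨h x, by simp_all [← hch x], hgh x⟩
    · rintro i y ⟨x, hx, rfl⟩
      exact ⟨k x, by simp_all [← hck x], hfk x⟩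
  · rintro ⟨α, hα, β, hβ, ⟨h1, h2⟩, hfg, hgf⟩
    constructor
    · have key : ∀ x, ∃ y, idx y = α (idx x) ∧ g y = f x := by
        intro x
        obtain ⟨y, hy, hy2⟩ := hfg (idx x) ⟨x, rfl, rfl⟩
        exact ⟨y, hy, hy2⟩
      choose h hh1 hh2 using key
      exact ⟨h, ⟨α, hα, fun x => (hh1 x).symm⟩, hh2⟩
    · have key : ∀ x, ∃ y, idx y = β (idx x) ∧ f y = g x := by
        intro x
        obtain ⟨y, hy, hy2⟩ := hgf (idx x) ⟨x, rfl, rfl⟩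
        exact ⟨y, hy, hy2⟩
      choose k hk1 hk2 using key
      exact ⟨k, ⟨β, hβ, fun x => (hk1 x).symm⟩, hk2⟩
end

section
/- For f, g ∈ T(X,P): (f,g) ∈ L (Green's L-relation) in T(X,P) if and only if for each i ∈ I there exist j, k ∈ I such that X_i f ⊆ X_j g and X_i g ⊆ X_k f. -/
open Function Set

theorem L_related_TXP_iff {X I : Type*} (idx : X → I)
    (hsurj : Function.Surjective idx) (f g : X → X)
    (hfP : PresP idx f) (hgP : PresP idx g) :
    ((∃ h, PresP idx h ∧ ∀ x, g (h x) = f x) ∧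
     (∃ k, PresP idx k ∧ ∀ x, f (k x) = g x)) ↔
      ∀ i : I, ∃ j k : I, f '' (idx ⁻¹' {i}) ⊆ g '' (idx ⁻¹' {j}) ∧
        g '' (idx ⁻¹' {i}) ⊆ f '' (idx ⁻¹' {k}) := by
  constructor
  · rintro ⟨⟨h, ⟨ch, hch⟩, hgh⟩, ⟨k, ⟨ck, hck⟩, hfk⟩⟩ i
    refine ⟨ch i, ck i, ?_, ?_⟩
    · rintro _ ⟨x, hx, rfl⟩
      exact ⟨h x, by simp [Set.mem_preimage, ← hch x, Set.mem_singleton_iff.mp hx], hgh x⟩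
    · rintro _ ⟨x, hx, rfl⟩
      exact ⟨k x, by simp [Set.mem_preimage, ← hck x, Set.mem_singleton_iff.mp hx], hfk x⟩
  · intro H
    choose j k hj hk using H
    constructor
    · have : ∀ x, ∃ y, idx y = j (idx x) ∧ g y = f x := by
        intro x
        obtain ⟨y, hy, hgy⟩ := hj (idx x) ⟨x, rfl, rfl⟩
        exact ⟨y, hy, hgy⟩
      choose h h1 h2 using this
      exact ⟨h, ⟨j, fun x => (h1 x).symm⟩, h2⟩
    · have : ∀ x, ∃ y, idx y = k (idx x) ∧ f y = g x := by
        intro x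
        obtain ⟨y, hy, hfy⟩ := hk (idx x) ⟨x, rfl, rfl⟩
        exact ⟨y, hy, hfy⟩
      choose h h1 h2 using this
      exact ⟨h, ⟨k, fun x => (h1 x).symm⟩, h2⟩
end

section
/- Assume id_I ∈ S(I). For f, g ∈ T_{S(I)}(X,P): R_f ≤ R_g in T_{S(I)}(X,P) (i.e., f = gh for some h in the monoid) if and only if R_{χ^(f)} ≤ R_{χ^(g)} in S(I) (i.e., χ^(f) = χ^(g) β for some β ∈ S(I) or χ^(f) = χ^(g)) and ker(g) ⊆ ker(f). -/
open Function Set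

theorem R_preorder_iff {X I : Type*} (idx : X → I)
    (hsurj : Function.Surjective idx) (S : Set (I → I))
    (hS : ∀ α ∈ S, ∀ β ∈ S, (fun i => β (α i)) ∈ S)
    (hid : (id : I → I) ∈ S)
    (f g : X → X) (cf cg : I → I)
    (hf : IsChar idx f cf) (hcf : cf ∈ S)
    (hg : IsChar idx g cg) (hcg : cg ∈ S) :
    (∃ h, InTS idx S h ∧ ∀ x, h (g x) = f x) ↔
      (((∃ β ∈ S, ∀ i, β (cg i) = cf i) ∨ cf = cg) ∧
       ∀ x y : X, g x = g y → f x = f y) := by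
  constructor
  · rintro ⟨h, ⟨ch, hchS, hch⟩, hhg⟩
    constructor
    · left
      refine ⟨ch, hchS, fun i => ?_⟩
      obtain ⟨x, rfl⟩ := hsurj i
      rw [hg, hch, hhg, ← hf]
    · intro x y hxy
      rw [← hhg x, ← hhg y, hxy]
  · rintro ⟨hβ, hker⟩
    obtain ⟨β, hβS, hβeq⟩ : ∃ β ∈ S, ∀ i, β (cg i) = cf i := by
      rcases hβ with h | rfl
      · exact h
      · exact ⟨id, hid, fun i => rfl⟩
    classical
    refine ⟨fun z => if hz : ∃ x, g x = z then f (Classical.choose hz)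
        else Classical.choose (hsurj (β (idx z))), ⟨β, hβS, ?_⟩, ?_⟩
    · intro z
      by_cases hz : ∃ x, g x = z
      · simp only [dif_pos hz]
        have hx : idx z = cg (idx (Classical.choose hz)) := by
          rw [hg, Classical.choose_spec hz]
        rw [hx, hβeq, hf]
      · simp only [dif_neg hz]
        exact (Classical.choose_spec (hsurj (β (idx z)))).symm
    · intro x
      have hz : ∃ y, g y = g x := ⟨x, rfl⟩
      simp only [dif_pos hz]
      exact hker _ _ (Classical.choose_spec hz)
end

section
/- Assume id_I ∈ S(I). For f, g ∈ T_{S(I)}(X,P): (f,g) ∈ R (Green's R-relation) in T_{S(I)}(X,P) if and only if (χ^(f), χ^(g)) ∈ R in S(I) and ker(f) = ker(g). -/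
open Function Set

lemma exists_factor {X I : Type*} (idx : X → I) (hsurj : Function.Surjective idx)
    (f g : X → X) (cf cg β : I → I)
    (hf : IsChar idx f cf) (hg : IsChar idx g cg)
    (hβ : ∀ i, β (cg i) = cf i)
    (hker : ∀ x y, g x = g y → f x = f y) :
    ∃ h, IsChar idx h β ∧ ∀ x, h (g x) = f x := by
  classical
  refine ⟨fun y => if hy : ∃ x, g x = y then f hy.choose else (hsurj (β (idx y))).choose,
    ?_, ?_⟩
  · intro y
    by_cases hy : ∃ x, g x = y
    · simp only [dif_pos hy]
      rw [← hf hy.choose, ← hβ, hg, hy.choose_spec]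
    · simp only [dif_neg hy]
      exact ((hsurj (β (idx y))).choose_spec).symm
  · intro x
    have hy : ∃ x', g x' = g x := ⟨x, rfl⟩
    simp only [dif_pos hy]
    exact hker _ _ hy.choose_spec

theorem R_related_iff {X I : Type*} (idx : X → I)
    (hsurj : Function.Surjective idx) (S : Set (I → I))
    (hS : ∀ α ∈ S, ∀ β ∈ S, (fun i => β (α i)) ∈ S)
    (hid : (id : I → I) ∈ S)
    (f g : X → X) (cf cg : I → I)
    (hf : IsChar idx f cf) (hcf : cf ∈ S)
    (hg : IsChar idx g cg) (hcg : cg ∈ S) :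
    ((∃ h, InTS idx S h ∧ ∀ x, h (g x) = f x) ∧
     (∃ k, InTS idx S k ∧ ∀ x, k (f x) = g x)) ↔
      ((((∃ β ∈ S, ∀ i, β (cg i) = cf i) ∨ cf = cg) ∧
        ((∃ γ ∈ S, ∀ i, γ (cf i) = cg i) ∨ cg = cf)) ∧
       ∀ x y : X, f x = f y ↔ g x = g y) := by
  constructor
  · rintro ⟨⟨h, ⟨ch, hchS, hch⟩, hhg⟩, ⟨k, ⟨ck, hckS, hck⟩, hkf⟩⟩
    refine ⟨⟨Or.inl ⟨ch, hchS, ?_⟩, Or.inl ⟨ck, hckS, ?_⟩⟩, ?_⟩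
    · intro i
      obtain ⟨x, rfl⟩ := hsurj i
      rw [hg, hch, hhg, ← hf]
    · intro i
      obtain ⟨x, rfl⟩ := hsurj i
      rw [hf, hck, hkf, ← hg]
    · intro x y
      constructor
      · intro hxy
        rw [← hkf, ← hkf, hxy]
      · intro hxy
        rw [← hhg, ← hhg, hxy]
  · rintro ⟨⟨hβ, hγ⟩, hker⟩
    have hβ' : ∃ β ∈ S, ∀ i, β (cg i) = cf i := by
      rcases hβ with h | h
      · exact h
      · exact ⟨id, hid, fun i => (congrFun h i).symm⟩
    have hγ' : ∃ γ ∈ S, ∀ i, γ (cf i) = cg i := by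
      rcases hγ with h | h
      · exact h
      · exact ⟨id, hid, fun i => (congrFun h i).symm⟩
    obtain ⟨β, hβS, hβc⟩ := hβ'
    obtain ⟨γ, hγS, hγc⟩ := hγ'
    obtain ⟨h, hhc, hh⟩ := exists_factor idx hsurj f g cf cg β hf hg hβc
      (fun x y hxy => (hker x y).mpr hxy)
    obtain ⟨k, hkc, hk⟩ := exists_factor idx hsurj g f cg cf γ hg hf hγc
      (fun x y hxy => (hker x y).mp hxy)
    exact ⟨⟨h, ⟨β, hβS, hhc⟩, hh⟩, ⟨k, ⟨γ, hγS, hkc⟩, hk⟩⟩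
end
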